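/- Assume 2 ≤ k, n ≥ k + 2, and n + k is even. Let x₁,…,x_n ∈ F and let X ∈ M_{n,k}(F) be the matrix whose first column is (x₁,…,x_n)ᵗ, whose j-th column for 2 ≤ j ≤ k−1 is the j-th standard basis column vector e_j, and whose k-th column has entry 0 in row 1 and entry 1 in rows 2,…,n. Then det_{n,k}(X) = x₁. -/

import Mathlib

/- The Cullis determinant of an `n × k` matrix: the alternating sum of its maximal
(`k × k`) minors, indexed by strictly increasing selections of `k` rows. -/
open Classical in
noncomputable def cullisDet {F : Type*} [Field F] {n k : ℕ} (X : Matrix (Fin n) (Fin k) F) : F :=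
  ∑ f ∈ Finset.univ.filter (fun f : Fin k → Fin n => StrictMono f),
    (-1 : F) ^ (∑ α : Fin k, ((f α : ℕ) + (α : ℕ))) * (X.submatrix f id).det

namespace CullisAux

variable {F : Type*} [Field F]


lemma neg_one_pow_congr {s t : ℕ} (h : s % 2 = t % 2) : (-1 : F) ^ s = (-1) ^ t := by
  rcases Nat.even_or_odd s with hs | hs
  · have ht : Even t := by rw [Nat.even_iff] at hs ⊢; omega
    rw [hs.neg_one_pow, ht.neg_one_pow]
  · have ht : Odd t := by rw [Nat.odd_iff] at hs ⊢; omega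
    rw [hs.neg_one_pow, ht.neg_one_pow]

lemma alt_Ico (p q : ℕ) :
    ∑ i ∈ Finset.Ico p q, (-1 : F) ^ i
      = (-1) ^ p * (if Even (q - p) then 0 else 1) := by
  rw [Finset.sum_Ico_eq_sum_range]
  simp_rw [pow_add]
  rw [← Finset.mul_sum, neg_one_geom_sum]

lemma fin_mk_val (N a : ℕ) (h : a < N) : ((⟨a, h⟩ : Fin N) : ℕ) = a := rfl

lemma succAbove_val {N : ℕ} (i : Fin (N + 1)) (α : Fin N) :
    ((i.succAbove α) : ℕ) = if (α : ℕ) < (i : ℕ) then (α : ℕ) else (α : ℕ) + 1 := by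
  rcases Nat.lt_or_ge (α : ℕ) (i : ℕ) with h | h
  · rw [if_pos h, Fin.succAbove, if_pos (by simpa [Fin.lt_def] using h)]
    rfl
  · rw [if_neg (by omega), Fin.succAbove, if_neg (by simp [Fin.lt_def]; omega)]
    rfl

lemma strictMono_gap {k n : ℕ} {f : Fin k → Fin n} (hf : StrictMono f) :
    ∀ (d a : ℕ) (h : a + d < k), (f ⟨a, by omega⟩ : ℕ) + d ≤ (f ⟨a + d, h⟩ : ℕ) := by
  intro d
  induction d with
  | zero => intro a h; simp
  | succ d ih =>
    intro a h
    have h1 : a + d < k := by omega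
    have h2 := ih a h1
    have h3 : (f ⟨a + d, h1⟩ : ℕ) < (f ⟨a + d + 1, by omega⟩ : ℕ) :=
      hf (by simp [Fin.lt_def])
    have e : (⟨a + (d + 1), h⟩ : Fin k) = ⟨a + d + 1, by omega⟩ := rfl
    rw [e]
    omega

variable (m n : ℕ)

/-- The matrix from the statement, with `k = m + 2`. -/
def theX (x : Fin n → F) : Matrix (Fin n) (Fin (m + 2)) F := fun i j =>
  if (j : ℕ) = 0 then x i
  else if (j : ℕ) = m + 1 then (if (i : ℕ) = 0 then 0 else 1)
  else if (i : ℕ) = (j : ℕ) then 1 else 0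

def phiA (hn : m + 3 ≤ n) (b : Fin n) : Fin (m + 2) → Fin n := fun α =>
  if (α : ℕ) = m + 1 then b else Fin.castLE (by omega) α

def phiB (hn : m + 3 ≤ n) (a b : Fin n) : Fin (m + 2) → Fin n := fun α =>
  if (α : ℕ) = m + 1 then b
  else if (α : ℕ) = m then a
  else ⟨(α : ℕ) + 1, by have := α.isLt; omega⟩

lemma phiA_val (hn : m + 3 ≤ n) (b : Fin n) (α : Fin (m + 2)) :
    (phiA m n hn b α : ℕ) = if (α : ℕ) = m + 1 then (b : ℕ) else (α : ℕ) := by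
  unfold phiA; split_ifs <;> simp

lemma phiB_val (hn : m + 3 ≤ n) (a b : Fin n) (α : Fin (m + 2)) :
    (phiB m n hn a b α : ℕ) =
      if (α : ℕ) = m + 1 then (b : ℕ) else if (α : ℕ) = m then (a : ℕ)
      else (α : ℕ) + 1 := by
  unfold phiB; split_ifs <;> rfl

lemma phiA_mono (hn : m + 3 ≤ n) {b : Fin n} (hb : m + 1 ≤ (b : ℕ)) :
    StrictMono (phiA m n hn b) := by
  intro α β h
  have hα := α.isLt; have hβ := β.isLt
  rw [Fin.lt_def] at h ⊢
  rw [phiA_val, phiA_val]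
  split_ifs <;> omega

lemma phiB_mono (hn : m + 3 ≤ n) {a b : Fin n} (ha : m + 1 ≤ (a : ℕ))
    (hab : (a : ℕ) < (b : ℕ)) : StrictMono (phiB m n hn a b) := by
  intro α β h
  have hα := α.isLt; have hβ := β.isLt
  rw [Fin.lt_def] at h ⊢
  rw [phiB_val, phiB_val]
  split_ifs <;> omega

lemma signA (hn : m + 3 ≤ n) (b : Fin n) :
    (-1 : F) ^ (∑ α : Fin (m + 2), ((phiA m n hn b α : ℕ) + (α : ℕ)))
      = (-1) ^ ((b : ℕ) + (m + 1)) := by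
  rw [← Finset.prod_pow_eq_pow_sum, Fin.prod_univ_castSucc]
  have h1 : ∀ α : Fin (m + 1),
      (-1 : F) ^ ((phiA m n hn b α.castSucc : ℕ) + (α.castSucc : ℕ)) = 1 := by
    intro α
    have hv : (α.castSucc : ℕ) = (α : ℕ) := rfl
    rw [phiA_val, hv, if_neg (by have := α.isLt; omega)]
    exact Even.neg_one_pow ⟨(α : ℕ), by omega⟩
  rw [Finset.prod_congr rfl (fun α _ => h1 α), Finset.prod_const_one, one_mul,
    phiA_val]
  rw [Fin.val_last, if_pos rfl]

lemma signB (hn : m + 3 ≤ n) (a b : Fin n) :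
    (-1 : F) ^ (∑ α : Fin (m + 2), ((phiB m n hn a b α : ℕ) + (α : ℕ)))
      = (-1) ^ ((a : ℕ) + (b : ℕ) + m + 1) := by
  rw [← Finset.prod_pow_eq_pow_sum, Fin.prod_univ_castSucc, Fin.prod_univ_castSucc]
  have h1 : ∀ α : Fin m,
      (-1 : F) ^ ((phiB m n hn a b α.castSucc.castSucc : ℕ) + (α.castSucc.castSucc : ℕ))
        = -1 := by
    intro α
    have hv : (α.castSucc.castSucc : ℕ) = (α : ℕ) := rfl
    rw [phiB_val, hv, if_neg (by have := α.isLt; omega), if_neg (by have := α.isLt; omega)]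
    exact Odd.neg_one_pow ⟨(α : ℕ), by omega⟩
  rw [Finset.prod_congr rfl (fun α _ => h1 α), Finset.prod_const]
  have hc : (Finset.univ : Finset (Fin m)).card = m := by simp
  rw [hc]
  have hv1 : ((Fin.last m).castSucc : ℕ) = m := rfl
  have hv2 : ((Fin.last (m + 1)) : ℕ) = m + 1 := rfl
  rw [phiB_val, phiB_val, hv1, hv2, if_neg (by omega), if_pos rfl, if_pos rfl]
  rw [← pow_add, ← pow_add]
  exact neg_one_pow_congr (by omega)

lemma theX_col0 (x : Fin n → F) {r : Fin n} {j : Fin (m + 2)} (h0 : (j : ℕ) = 0) :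
    theX m n x r j = x r := by
  simp only [theX]; rw [if_pos h0]

lemma theX_ne (x : Fin n → F) {r : Fin n} {j : Fin (m + 2)} (h0 : (j : ℕ) ≠ 0)
    (hm : (j : ℕ) ≠ m + 1) (hne : (r : ℕ) ≠ (j : ℕ)) : theX m n x r j = 0 := by
  simp only [theX]; rw [if_neg h0, if_neg hm, if_neg hne]

lemma theX_diag (x : Fin n → F) {r : Fin n} {j : Fin (m + 2)} (h0 : (j : ℕ) ≠ 0)
    (hm : (j : ℕ) ≠ m + 1) (heq : (r : ℕ) = (j : ℕ)) : theX m n x r j = 1 := by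
  simp only [theX]; rw [if_neg h0, if_neg hm, if_pos heq]

lemma theX_last (x : Fin n → F) {r : Fin n} {j : Fin (m + 2)} (hm : (j : ℕ) = m + 1)
    (hr : (r : ℕ) ≠ 0) : theX m n x r j = 1 := by
  simp only [theX]; rw [if_neg (by omega), if_pos hm, if_neg hr]

lemma theX_last0 (x : Fin n → F) {r : Fin n} {j : Fin (m + 2)} (hm : (j : ℕ) = m + 1)
    (hr : (r : ℕ) = 0) : theX m n x r j = 0 := by
  simp only [theX]; rw [if_neg (by omega), if_pos hm, if_pos hr]

lemma detA (hn : m + 3 ≤ n) (x : Fin n → F) {b : Fin n} (hb : m + 1 ≤ (b : ℕ)) :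
    ((theX m n x).submatrix (phiA m n hn b) id).det = x ⟨0, by omega⟩ := by
  rw [Matrix.det_succ_column_zero]
  refine (Fintype.sum_eq_single (0 : Fin (m + 2)) ?_).trans ?_
  · intro i hi
    have hi0 : (i : ℕ) ≠ 0 := by intro h; exact hi (Fin.ext (by rw [h, Fin.val_zero]))
    have him := i.isLt
    rcases Nat.lt_or_ge (i : ℕ) (m + 1) with hle | hgt
    · -- 1 ≤ i ≤ m : the minor has a zero column
      apply mul_eq_zero_of_right
      apply Matrix.det_eq_zero_of_column_eq_zero ⟨(i : ℕ) - 1, by omega⟩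
      intro α
      have hα := α.isLt
      simp only [Matrix.submatrix_apply, id_eq]
      apply theX_ne m n x ?_ ?_ ?_ <;>
        simp only [phiA_val, succAbove_val, Fin.val_succ, fin_mk_val] <;>
        first | omega | (split_ifs <;> omega)
    · -- i = m + 1 : the minor has a zero row
      apply mul_eq_zero_of_right
      apply Matrix.det_eq_zero_of_row_eq_zero ⟨0, by omega⟩
      intro β
      have hβ := β.isLt
      simp only [Matrix.submatrix_apply, id_eq]
      have hsv : ((i.succAbove ⟨0, by omega⟩) : ℕ) = 0 := by
        simp only [succAbove_val, fin_mk_val]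
        rw [if_pos (by omega)]
      have hrv : (phiA m n hn b (i.succAbove ⟨0, by omega⟩) : ℕ) = 0 := by
        rw [phiA_val, hsv, if_neg (by omega)]
      by_cases hb1 : (β : ℕ) + 1 = m + 1
      · exact theX_last0 m n x (by rw [Fin.val_succ]; omega) hrv
      · refine theX_ne m n x ?_ ?_ ?_
        · rw [Fin.val_succ]; omega
        · rw [Fin.val_succ]; omega
        · rw [Fin.val_succ, hrv]; omega
  · -- main term at i = 0
    have h00 : (theX m n x).submatrix (phiA m n hn b) id 0 0 = x ⟨0, by omega⟩ := by
      simp only [Matrix.submatrix_apply, id_eq]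
      have e0 : phiA m n hn b 0 = ⟨0, by omega⟩ := by
        apply Fin.ext
        rw [phiA_val]
        simp
      rw [theX_col0 m n x (by simp), e0]
    have htri : (((theX m n x).submatrix (phiA m n hn b) id).submatrix
        (Fin.succAbove 0) Fin.succ).BlockTriangular id := by
      intro α β hlt
      simp only [id_eq] at hlt
      rw [Fin.lt_def] at hlt
      have hα := α.isLt
      simp only [Matrix.submatrix_apply, id_eq]
      apply theX_ne m n x ?_ ?_ ?_ <;>
        simp only [phiA_val, succAbove_val, Fin.val_succ, Fin.val_zero, fin_mk_val, Nat.not_lt_zero, if_false] <;>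
        first | omega | (split_ifs <;> omega)
    rw [Matrix.det_of_upperTriangular htri]
    have hprod : ∀ α : Fin (m + 1),
        ((theX m n x).submatrix (phiA m n hn b) id).submatrix
          (Fin.succAbove 0) Fin.succ α α = 1 := by
      intro α
      have hα := α.isLt
      have hsv : (((0 : Fin (m + 2)).succAbove α) : ℕ) = (α : ℕ) + 1 := by
        rw [succAbove_val, if_neg (by simp)]
      simp only [Matrix.submatrix_apply, id_eq]
      by_cases hc : (α : ℕ) + 1 = m + 1
      · apply theX_last
        · rw [Fin.val_succ]; omega
        · rw [phiA_val, hsv, if_pos hc]; omega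
      · apply theX_diag
        · rw [Fin.val_succ]; omega
        · rw [Fin.val_succ]; omega
        · rw [phiA_val, hsv, if_neg hc, Fin.val_succ]
    rw [Finset.prod_congr rfl (fun α _ => hprod α), Finset.prod_const_one, h00]
    simp

lemma detB (hn : m + 3 ≤ n) (x : Fin n → F) {a b : Fin n} (ha : m + 1 ≤ (a : ℕ))
    (hab : (a : ℕ) < (b : ℕ)) :
    ((theX m n x).submatrix (phiB m n hn a b) id).det
      = (-1) ^ m * x a + (-1) ^ (m + 1) * x b := by
  have hbn := b.isLt
  rw [Matrix.det_succ_column_zero]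
  refine ((Finset.sum_subset
      (Finset.subset_univ {(⟨m, by omega⟩ : Fin (m + 2)), ⟨m + 1, by omega⟩}) ?_).symm).trans ?_
  · intro i _ hi
    simp only [Finset.mem_insert, Finset.mem_singleton] at hi
    push_neg at hi
    have him := i.isLt
    have hi1 : (i : ℕ) ≠ m := fun h => hi.1 (Fin.ext h)
    have hi2 : (i : ℕ) ≠ m + 1 := fun h => hi.2 (Fin.ext h)
    have hlt : (i : ℕ) < m := by omega
    apply mul_eq_zero_of_right
    apply Matrix.det_eq_zero_of_column_eq_zero ⟨(i : ℕ), by omega⟩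
    intro α
    have hα := α.isLt
    simp only [Matrix.submatrix_apply, id_eq]
    apply theX_ne m n x ?_ ?_ ?_ <;>
      simp only [phiB_val, succAbove_val, Fin.val_succ, fin_mk_val] <;>
      first | omega | (split_ifs <;> omega)
  · rw [Finset.sum_pair (show (⟨m, by omega⟩ : Fin (m + 2)) ≠ ⟨m + 1, by omega⟩ from
      fun h => absurd (congrArg Fin.val h) (by simp))]
    have e1 : (theX m n x).submatrix (phiB m n hn a b) id ⟨m, by omega⟩ 0 = x a := by
      simp only [Matrix.submatrix_apply, id_eq]
      rw [theX_col0 m n x (by simp)]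
      congr 1
      apply Fin.ext
      rw [phiB_val]
      simp [fin_mk_val]
    have e2 : (theX m n x).submatrix (phiB m n hn a b) id ⟨m + 1, by omega⟩ 0 = x b := by
      simp only [Matrix.submatrix_apply, id_eq]
      rw [theX_col0 m n x (by simp)]
      congr 1
      apply Fin.ext
      rw [phiB_val]
      simp [fin_mk_val]
    have d1 : (((theX m n x).submatrix (phiB m n hn a b) id).submatrix
        (⟨m, by omega⟩ : Fin (m + 2)).succAbove Fin.succ).det = 1 := by
      have htri : (((theX m n x).submatrix (phiB m n hn a b) id).submatrix
          (⟨m, by omega⟩ : Fin (m + 2)).succAbove Fin.succ).BlockTriangular id := by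
        intro α β hlt
        simp only [id_eq] at hlt
        rw [Fin.lt_def] at hlt
        have hα := α.isLt
        simp only [Matrix.submatrix_apply, id_eq]
        apply theX_ne m n x ?_ ?_ ?_ <;>
          simp only [phiB_val, succAbove_val, Fin.val_succ, fin_mk_val] <;>
          first | omega | (split_ifs <;> omega)
      rw [Matrix.det_of_upperTriangular htri]
      apply Finset.prod_eq_one
      intro α _
      have hα := α.isLt
      simp only [Matrix.submatrix_apply, id_eq]
      have hsv : ((((⟨m, by omega⟩ : Fin (m + 2))).succAbove α) : ℕ)
          = if (α : ℕ) < m then (α : ℕ) else (α : ℕ) + 1 := by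
        simp only [succAbove_val, fin_mk_val]
      by_cases hc : (α : ℕ) = m
      · apply theX_last
        · rw [Fin.val_succ]; omega
        · rw [phiB_val, hsv]; split_ifs <;> omega
      · apply theX_diag
        · rw [Fin.val_succ]; omega
        · rw [Fin.val_succ]; omega
        · rw [phiB_val, hsv, Fin.val_succ]; split_ifs <;> omega
    have d2 : (((theX m n x).submatrix (phiB m n hn a b) id).submatrix
        (⟨m + 1, by omega⟩ : Fin (m + 2)).succAbove Fin.succ).det = 1 := by
      have htri : (((theX m n x).submatrix (phiB m n hn a b) id).submatrix
          (⟨m + 1, by omega⟩ : Fin (m + 2)).succAbove Fin.succ).BlockTriangular id := by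
        intro α β hlt
        simp only [id_eq] at hlt
        rw [Fin.lt_def] at hlt
        have hα := α.isLt
        simp only [Matrix.submatrix_apply, id_eq]
        apply theX_ne m n x ?_ ?_ ?_ <;>
          simp only [phiB_val, succAbove_val, Fin.val_succ, fin_mk_val] <;>
          first | omega | (split_ifs <;> omega)
      rw [Matrix.det_of_upperTriangular htri]
      apply Finset.prod_eq_one
      intro α _
      have hα := α.isLt
      simp only [Matrix.submatrix_apply, id_eq]
      have hsv : ((((⟨m + 1, by omega⟩ : Fin (m + 2))).succAbove α) : ℕ) = (α : ℕ) := by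
        simp only [succAbove_val, fin_mk_val]
        rw [if_pos (by omega)]
      by_cases hc : (α : ℕ) = m
      · apply theX_last
        · rw [Fin.val_succ]; omega
        · rw [phiB_val, hsv]; split_ifs <;> omega
      · apply theX_diag
        · rw [Fin.val_succ]; omega
        · rw [Fin.val_succ]; omega
        · rw [phiB_val, hsv, Fin.val_succ]; split_ifs <;> omega
    rw [e1, e2, d1, d2, fin_mk_val, fin_mk_val]
    ring

lemma char (m n : ℕ) (hn : m + 3 ≤ n) (f : Fin (m + 2) → Fin n) (hf : StrictMono f)
    (hr : ∀ j : ℕ, 1 ≤ j → j ≤ m → ∃ α, (f α : ℕ) = j) :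
    (∃ b : Fin n, m + 1 ≤ (b : ℕ) ∧ f = phiA m n hn b) ∨
    (∃ a b : Fin n, m + 1 ≤ (a : ℕ) ∧ (a : ℕ) < (b : ℕ) ∧ f = phiB m n hn a b) := by
  have hg : ∀ (j : ℕ) (hj : j < m + 2), (f ⟨0, by omega⟩ : ℕ) + j ≤ (f ⟨j, hj⟩ : ℕ) := by
    intro j hj
    have := strictMono_gap hf j 0 (by omega)
    simpa using this
  by_cases h0 : (f ⟨0, by omega⟩ : ℕ) = 0
  · left
    have key : ∀ j (hj : j ≤ m), (f ⟨j, hj.trans_lt (by omega)⟩ : ℕ) = j := by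
      intro j
      induction j using Nat.strong_induction_on with
      | _ j ih =>
        intro hj
        rcases Nat.eq_zero_or_pos j with rfl | hj1
        · exact h0
        · obtain ⟨α, hα⟩ := hr j hj1 hj
          have hav : j ≤ (α : ℕ) := by
            by_contra hc
            push_neg at hc
            have h3 := ih (α : ℕ) hc (by omega)
            have e : (⟨(α : ℕ), by omega⟩ : Fin (m + 2)) = α := rfl
            rw [e] at h3
            omega
          have h4 : (f ⟨j, by omega⟩ : ℕ) ≤ (f α : ℕ) := by
            have : (⟨j, by omega⟩ : Fin (m + 2)) ≤ α := by
              rw [Fin.le_def]; exact hav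
            exact hf.monotone this
          have h5 := hg j (by omega)
          omega
    have hb : m + 1 ≤ (f ⟨m + 1, by omega⟩ : ℕ) := by
      have h6 := key m (le_refl m)
      have h7 : (f ⟨m, by omega⟩ : ℕ) < (f ⟨m + 1, by omega⟩ : ℕ) :=
        hf (by simp [Fin.lt_def])
      omega
    refine ⟨f ⟨m + 1, by omega⟩, hb, ?_⟩
    funext α
    apply Fin.ext
    rw [phiA_val]
    have hα := α.isLt
    by_cases hc : (α : ℕ) = m + 1
    · rw [if_pos hc]
      congr 2
      exact Fin.ext hc
    · rw [if_neg hc]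
      have := key (α : ℕ) (by omega)
      have e : (⟨(α : ℕ), by omega⟩ : Fin (m + 2)) = α := rfl
      rw [e] at this
      exact this
  · right
    have h1 : 1 ≤ (f ⟨0, by omega⟩ : ℕ) := by omega
    have key : ∀ j (hj : j < m), (f ⟨j, hj.trans (by omega)⟩ : ℕ) = j + 1 := by
      intro j
      induction j using Nat.strong_induction_on with
      | _ j ih =>
        intro hj
        obtain ⟨α, hα⟩ := hr (j + 1) (by omega) (by omega)
        have hav1 : j ≤ (α : ℕ) := by
          by_contra hc
          push_neg at hc
          have h3 := ih (α : ℕ) hc (by omega)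
          have e : (⟨(α : ℕ), by omega⟩ : Fin (m + 2)) = α := rfl
          rw [e] at h3
          omega
        have hav2 : (α : ℕ) ≤ j := by
          by_contra hc
          push_neg at hc
          have h4 : (f ⟨j, by omega⟩ : ℕ) < (f α : ℕ) := by
            apply hf
            rw [Fin.lt_def]
            exact hc
          have h5 := hg j (by omega)
          omega
        have e : α = ⟨j, by omega⟩ := Fin.ext (by simp [fin_mk_val]; omega)
        rw [e] at hα
        omega
    have ha : m + 1 ≤ (f ⟨m, by omega⟩ : ℕ) := by
      have := hg m (by omega)
      omega
    have hab : (f ⟨m, by omega⟩ : ℕ) < (f ⟨m + 1, by omega⟩ : ℕ) :=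
      hf (by simp [Fin.lt_def])
    refine ⟨f ⟨m, by omega⟩, f ⟨m + 1, by omega⟩, ha, hab, ?_⟩
    funext α
    apply Fin.ext
    rw [phiB_val]
    have hα := α.isLt
    by_cases hc1 : (α : ℕ) = m + 1
    · rw [if_pos hc1]
      congr 2
      exact Fin.ext hc1
    · rw [if_neg hc1]
      by_cases hc2 : (α : ℕ) = m
      · rw [if_pos hc2]
        congr 2
        exact Fin.ext hc2
      · rw [if_neg hc2]
        have := key (α : ℕ) (by omega)
        have e : (⟨(α : ℕ), by omega⟩ : Fin (m + 2)) = α := rfl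
        rw [e] at this
        exact this

lemma fin_if_sum (n p q : ℕ) (hq : q ≤ n) (g : ℕ → F) :
    ∑ i : Fin n, (if p ≤ (i : ℕ) ∧ (i : ℕ) < q then g (i : ℕ) else 0)
      = ∑ i ∈ Finset.Ico p q, g i := by
  rw [Fin.sum_univ_eq_sum_range (fun i => if p ≤ i ∧ i < q then g i else 0)]
  calc ∑ i ∈ Finset.range n, (if p ≤ i ∧ i < q then g i else 0)
      = ∑ i ∈ Finset.range n, (if i ∈ Finset.Ico p q then g i else 0) := by
        simp only [Finset.mem_Ico]
    _ = ∑ i ∈ Finset.range n ∩ Finset.Ico p q, g i := Finset.sum_ite_mem _ _ _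
    _ = ∑ i ∈ Finset.Ico p q, g i := by
        congr 1
        ext i
        simp only [Finset.mem_inter, Finset.mem_range, Finset.mem_Ico]
        omega

lemma sumA (m n : ℕ) (hn : m + 3 ≤ n) (hpar : Even (n + m)) (c : F) :
    ∑ b ∈ Finset.univ.filter (fun b : Fin n => m + 1 ≤ (b : ℕ)),
      (-1 : F) ^ ((b : ℕ) + (m + 1)) * c = c := by
  obtain ⟨t, ht⟩ := hpar
  rw [Finset.sum_filter]
  have step : ∀ b : Fin n, (if m + 1 ≤ (b : ℕ) then (-1 : F) ^ ((b : ℕ) + (m + 1)) * c else 0)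
      = if m + 1 ≤ (b : ℕ) ∧ (b : ℕ) < n then (-1 : F) ^ ((b : ℕ) + (m + 1)) * c else 0 := by
    intro b
    have := b.isLt
    split_ifs with h1 h2 h2 <;> first | rfl | omega
  rw [Finset.sum_congr rfl (fun b _ => step b),
    fin_if_sum n (m + 1) n le_rfl (fun i => (-1 : F) ^ (i + (m + 1)) * c)]
  simp_rw [pow_add]
  rw [← Finset.sum_mul, ← Finset.sum_mul, alt_Ico]
  rw [if_neg (by rw [Nat.even_iff]; omega), mul_one]
  have h2 : (-1 : F) ^ (m + 1) * ((-1) ^ m * (-1) ^ 1) = 1 := by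
    rw [← pow_add, ← pow_add]; exact Even.neg_one_pow ⟨m + 1, rfl⟩
  rw [h2, one_mul]

lemma sumB (m n : ℕ) (hn : m + 3 ≤ n) (hpar : Even (n + m)) (x : Fin n → F) :
    ∑ p ∈ Finset.univ.filter
        (fun p : Fin n × Fin n => m + 1 ≤ (p.1 : ℕ) ∧ (p.1 : ℕ) < (p.2 : ℕ)),
      (-1 : F) ^ ((p.1 : ℕ) + (p.2 : ℕ)) * (x p.2 - x p.1) = 0 := by
  obtain ⟨t, ht⟩ := hpar
  rw [Finset.sum_filter, Fintype.sum_prod_type]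
  have split : ∀ (a b : Fin n),
      (if m + 1 ≤ (a : ℕ) ∧ (a : ℕ) < (b : ℕ) then
        (-1 : F) ^ ((a : ℕ) + (b : ℕ)) * (x b - x a) else 0)
      = (if m + 1 ≤ (a : ℕ) ∧ (a : ℕ) < (b : ℕ) then (-1 : F) ^ ((a : ℕ) + (b : ℕ)) * x b else 0)
        - (if m + 1 ≤ (a : ℕ) ∧ (a : ℕ) < (b : ℕ) then (-1 : F) ^ ((a : ℕ) + (b : ℕ)) * x a else 0) := by
    intro a b
    split_ifs <;> ring
  simp_rw [split, Finset.sum_sub_distrib]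
  rw [sub_eq_zero]
  -- LHS : coefficient of x b, collected by swapping the order
  rw [Finset.sum_comm]
  apply Finset.sum_congr rfl
  intro c _
  have hcn := c.isLt
  -- left  : ∑ a, if m+1 ≤ a ∧ a < c then (-1)^(a+c) * x c
  -- right : ∑ b, if m+1 ≤ c ∧ c < b then (-1)^(c+b) * x c
  have lstep : ∀ a : Fin n,
      (if m + 1 ≤ (a : ℕ) ∧ (a : ℕ) < (c : ℕ) then (-1 : F) ^ ((a : ℕ) + (c : ℕ)) * x c else 0)
      = (if m + 1 ≤ (a : ℕ) ∧ (a : ℕ) < (c : ℕ) then (-1 : F) ^ (a : ℕ) else 0)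
          * ((-1) ^ (c : ℕ) * x c) := by
    intro a
    split_ifs
    · rw [pow_add]; ring
    · ring
  have rstep : ∀ b : Fin n,
      (if m + 1 ≤ (c : ℕ) ∧ (c : ℕ) < (b : ℕ) then (-1 : F) ^ ((c : ℕ) + (b : ℕ)) * x c else 0)
      = (if (c : ℕ) + 1 ≤ (b : ℕ) ∧ (b : ℕ) < n then (-1 : F) ^ (b : ℕ) else 0)
          * (if m + 1 ≤ (c : ℕ) then (-1 : F) ^ (c : ℕ) * x c else 0) := by
    intro b
    have := b.isLt
    split_ifs <;> first | (exfalso; omega) | (rw [pow_add]; ring) | ring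
  rw [Finset.sum_congr rfl (fun a _ => lstep a), Finset.sum_congr rfl (fun b _ => rstep b),
    ← Finset.sum_mul, ← Finset.sum_mul,
    fin_if_sum n (m + 1) (c : ℕ) (by omega) (fun i => (-1 : F) ^ i),
    fin_if_sum n ((c : ℕ) + 1) n le_rfl (fun i => (-1 : F) ^ i),
    alt_Ico, alt_Ico]
  by_cases hc : m + 1 ≤ (c : ℕ)
  · rw [if_pos hc]
    rcases Nat.even_or_odd ((c : ℕ) - (m + 1)) with he | ho
    · rw [if_pos he, if_pos (show Even (n - ((c : ℕ) + 1)) by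
        rw [Nat.even_iff] at he ⊢; omega)]
      ring
    · rw [if_neg (by rw [Nat.even_iff]; rw [Nat.odd_iff] at ho; omega),
        if_neg (by rw [Nat.even_iff]; rw [Nat.odd_iff] at ho; omega)]
      rw [neg_one_pow_congr (show (m + 1) % 2 = ((c : ℕ) + 1) % 2 by
        rw [Nat.odd_iff] at ho; omega)]
  · rw [if_neg hc, if_pos (show Even ((c : ℕ) - (m + 1)) from ⟨0, by omega⟩)]
    ring


lemma main_sum (m n : ℕ) (hn : m + 3 ≤ n) (hpar : Even (n + m)) (x : Fin n → F)
    (S : Finset (Fin (m + 2) → Fin n)) (hS : ∀ f, f ∈ S ↔ StrictMono f) :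
    ∑ f ∈ S, (-1 : F) ^ (∑ α : Fin (m + 2), ((f α : ℕ) + (α : ℕ))) *
        ((theX m n x).submatrix f id).det = x ⟨0, by omega⟩ := by
  classical
  set T : Finset (Fin n) := Finset.univ.filter (fun b : Fin n => m + 1 ≤ (b : ℕ)) with hTdef
  set P : Finset (Fin n × Fin n) := Finset.univ.filter
    (fun p : Fin n × Fin n => m + 1 ≤ (p.1 : ℕ) ∧ (p.1 : ℕ) < (p.2 : ℕ)) with hPdef
  have hsub : T.image (phiA m n hn) ∪ P.image (fun p => phiB m n hn p.1 p.2) ⊆ S := by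
    intro f hf
    rw [hS]
    rcases Finset.mem_union.mp hf with h | h
    · obtain ⟨b, hb, rfl⟩ := Finset.mem_image.mp h
      exact phiA_mono m n hn (Finset.mem_filter.mp hb).2
    · obtain ⟨p, hp, rfl⟩ := Finset.mem_image.mp h
      obtain ⟨hp1, hp2⟩ := (Finset.mem_filter.mp hp).2
      exact phiB_mono m n hn hp1 hp2
  have hvanish : ∀ f ∈ S,
      f ∉ T.image (phiA m n hn) ∪ P.image (fun p => phiB m n hn p.1 p.2) →
      (-1 : F) ^ (∑ α : Fin (m + 2), ((f α : ℕ) + (α : ℕ))) *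
        ((theX m n x).submatrix f id).det = 0 := by
    intro f hfS hfn
    have hf : StrictMono f := (hS f).mp hfS
    have hmiss : ¬ ∀ j : ℕ, 1 ≤ j → j ≤ m → ∃ α, (f α : ℕ) = j := by
      intro hr
      rcases char m n hn f hf hr with ⟨b, hb, rfl⟩ | ⟨a, b, ha, hab, rfl⟩
      · exact hfn (Finset.mem_union_left _ (Finset.mem_image_of_mem _
          (Finset.mem_filter.mpr ⟨Finset.mem_univ _, hb⟩)))
      · exact hfn (Finset.mem_union_right _ (Finset.mem_image_of_mem
          (fun p => phiB m n hn p.1 p.2)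
          (Finset.mem_filter.mpr ⟨Finset.mem_univ ((a, b) : Fin n × Fin n), ha, hab⟩)))
    push_neg at hmiss
    obtain ⟨j, hj1, hjm, hjno⟩ := hmiss
    apply mul_eq_zero_of_right
    apply Matrix.det_eq_zero_of_column_eq_zero ⟨j, by omega⟩
    intro α
    simp only [Matrix.submatrix_apply, id_eq]
    exact theX_ne m n x (by rw [fin_mk_val]; omega) (by rw [fin_mk_val]; omega)
      (by rw [fin_mk_val]; exact hjno α)
  have hdisj : Disjoint (T.image (phiA m n hn)) (P.image (fun p => phiB m n hn p.1 p.2)) := by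
    rw [Finset.disjoint_left]
    rintro f hfA hfB
    obtain ⟨b, hb, rfl⟩ := Finset.mem_image.mp hfA
    obtain ⟨p, hp, heq⟩ := Finset.mem_image.mp hfB
    obtain ⟨hp1, hp2⟩ := (Finset.mem_filter.mp hp).2
    have h1 := congrArg (fun g => (g ⟨0, by omega⟩ : ℕ)) heq
    have hA0 : (phiA m n hn b ⟨0, by omega⟩ : ℕ) = 0 := by
      rw [phiA_val, fin_mk_val, if_neg (by omega)]
    have hB0 : 1 ≤ (phiB m n hn p.1 p.2 ⟨0, by omega⟩ : ℕ) := by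
      rw [phiB_val, fin_mk_val]
      split_ifs <;> omega
    rw [hA0] at h1
    omega
  have hinjA : ∀ b ∈ T, ∀ c ∈ T, phiA m n hn b = phiA m n hn c → b = c := by
    intro b _ c _ h
    have e : ∀ b' : Fin n, phiA m n hn b' ⟨m + 1, by omega⟩ = b' := by
      intro b'
      unfold phiA
      rw [if_pos (fin_mk_val _ _ _)]
    rw [← e b, ← e c, h]
  have hinjB : ∀ p ∈ P, ∀ q ∈ P,
      phiB m n hn p.1 p.2 = phiB m n hn q.1 q.2 → p = q := by
    intro p _ q _ h
    have e1 : ∀ a' b' : Fin n, phiB m n hn a' b' ⟨m, by omega⟩ = a' := by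
      intro a' b'
      unfold phiB
      rw [if_neg (by rw [fin_mk_val]; omega), if_pos (fin_mk_val _ _ _)]
    have e2 : ∀ a' b' : Fin n, phiB m n hn a' b' ⟨m + 1, by omega⟩ = b' := by
      intro a' b'
      unfold phiB
      rw [if_pos (fin_mk_val _ _ _)]
    have h1 : p.1 = q.1 := by rw [← e1 p.1 p.2, ← e1 q.1 q.2, h]
    have h2 : p.2 = q.2 := by rw [← e2 p.1 p.2, ← e2 q.1 q.2, h]
    exact Prod.ext h1 h2
  rw [← Finset.sum_subset hsub hvanish, Finset.sum_union hdisj,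
    Finset.sum_image hinjA, Finset.sum_image hinjB]
  have hA : ∑ b ∈ T, (-1 : F) ^ (∑ α : Fin (m + 2), ((phiA m n hn b α : ℕ) + (α : ℕ))) *
        ((theX m n x).submatrix (phiA m n hn b) id).det
      = ∑ b ∈ T, (-1 : F) ^ ((b : ℕ) + (m + 1)) * x ⟨0, by omega⟩ := by
    apply Finset.sum_congr rfl
    intro b hb
    rw [signA, detA m n hn x (Finset.mem_filter.mp hb).2]
  have hB : ∑ p ∈ P, (-1 : F) ^ (∑ α : Fin (m + 2), ((phiB m n hn p.1 p.2 α : ℕ) + (α : ℕ))) *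
        ((theX m n x).submatrix (phiB m n hn p.1 p.2) id).det
      = ∑ p ∈ P, (-1 : F) ^ ((p.1 : ℕ) + (p.2 : ℕ)) * (x p.2 - x p.1) := by
    apply Finset.sum_congr rfl
    intro p hp
    obtain ⟨h1, h2⟩ := (Finset.mem_filter.mp hp).2
    rw [signB, detB m n hn x h1 h2]
    rw [mul_add, ← mul_assoc, ← mul_assoc, ← pow_add, ← pow_add]
    rw [neg_one_pow_congr (show ((p.1 : ℕ) + (p.2 : ℕ) + m + 1 + m) % 2
      = ((p.1 : ℕ) + (p.2 : ℕ) + 1) % 2 by omega)]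
    rw [neg_one_pow_congr (show ((p.1 : ℕ) + (p.2 : ℕ) + m + 1 + (m + 1)) % 2
      = ((p.1 : ℕ) + (p.2 : ℕ)) % 2 by omega)]
    rw [pow_succ]
    ring
  rw [hA, hB, sumA m n hn hpar (x ⟨0, by omega⟩), sumB m n hn hpar x, add_zero]

end CullisAux

/-- for `2 ≤ k`, `n ≥ k + 2`, `n + k` even, the Cullis determinant of the
matrix with first column `(x₁,…,x_n)ᵗ`, middle columns the standard basis vectors, and
last column `(0,1,…,1)ᵗ` equals `x₁`. -/
theorem cullis_first_entry {F : Type*} [Field F] (n k : ℕ)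
    (hk : 2 ≤ k) (hn : k + 2 ≤ n) (hpar : Even (n + k)) (x : Fin n → F) :
    cullisDet (fun (i : Fin n) (j : Fin k) =>
        if (j : ℕ) = 0 then x i
        else if (j : ℕ) = k - 1 then (if (i : ℕ) = 0 then 0 else 1)
        else if (i : ℕ) = (j : ℕ) then 1 else 0)
      = x ⟨0, by omega⟩ := by
  obtain ⟨m, rfl⟩ : ∃ m, k = m + 2 := ⟨k - 2, by omega⟩
  have hn' : m + 3 ≤ n := by omega
  have hpar' : Even (n + m) := by
    rcases hpar with ⟨t, ht⟩
    exact ⟨t - 1, by omega⟩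
  unfold cullisDet
  exact CullisAux.main_sum m n hn' hpar' x _ (fun f => by simp)
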